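/- The quotient of the category of abelian groups by the Serre subcategory of torsion abelian groups is equivalent to the category of rational vector spaces. In particular, Hom in the quotient category between Z and Z equals Q, computed as the colimit over n of Hom(nZ, Z). -/

import Mathlib

open CategoryTheory

/-- The class of morphisms of abelian groups whose kernel and cokernel are torsion:
these are precisely the morphisms inverted by the quotient functor
`Ab → Ab/(torsion groups)`. -/
def torsionW : MorphismProperty AddCommGrpCat.{0} := fun _ Y f =>
  AddMonoid.IsTorsion f.hom.ker ∧ AddMonoid.IsTorsion (Y ⧸ f.hom.range)

namespace AbTorsionAux
open TensorProduct
noncomputable section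

/-- The functor `Ab ⥤ Mod ℚ`, `X ↦ ℚ ⊗[ℤ] X`. -/
def QF : AddCommGrpCat.{0} ⥤ ModuleCat.{0} ℚ where
  obj X := ModuleCat.of ℚ (ℚ ⊗[ℤ] X)
  map f := ModuleCat.ofHom (f.hom.toIntLinearMap.baseChange ℚ)
  map_id X := by
    apply ModuleCat.hom_ext
    show (LinearMap.id : X →ₗ[ℤ] X).baseChange ℚ = LinearMap.id
    rw [LinearMap.baseChange_id]
  map_comp f g := by
    apply ModuleCat.hom_ext
    show (g.hom.toIntLinearMap.comp f.hom.toIntLinearMap).baseChange ℚ = _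
    rw [LinearMap.baseChange_comp]
    rfl

instance : (forget₂ (ModuleCat.{0} ℚ) AddCommGrpCat.{0}).Full where
  map_surjective {A B} f :=
    ⟨ModuleCat.ofHom (@LinearMap.mk _ _ _ _ _ _ _ _ _ A.isModule B.isModule
        { toFun := f,
          map_add' := AddMonoidHom.map_add (show A.carrier →+ B.carrier from f.hom) }
        (fun q x => map_rat_smul (_instM := A.isModule) (_instM₂ := B.isModule)
          (show A.carrier →+ B.carrier from f.hom) q x)), rfl⟩

/-- `QF` is left adjoint to the forgetful functor. -/
def adj : QF ⊣ forget₂ (ModuleCat.{0} ℚ) AddCommGrpCat.{0} :=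
  Adjunction.mkOfHomEquiv
  { homEquiv := fun X N =>
      { toFun := fun h => AddCommGrpCat.ofHom ((h.hom.restrictScalars ℤ).comp (TensorProduct.mk ℤ ℚ X 1)).toAddMonoidHom
        invFun := fun g => ModuleCat.ofHom (LinearMap.liftBaseChange ℚ (show ↥X →+ ↥N from g.hom).toIntLinearMap)
        left_inv := fun h => by
          apply ModuleCat.hom_ext
          apply LinearMap.ext
          intro t
          induction t using TensorProduct.induction_on with
          | zero => simp
          | tmul a x =>
            have : a ⊗ₜ[ℤ] x = a • ((1:ℚ) ⊗ₜ[ℤ] x) := by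
              rw [smul_tmul', smul_eq_mul, mul_one]
            rw [this, map_smul, map_smul]
            show a • (LinearMap.liftBaseChange ℚ (show ↥X →+ ↥N from
                ((h.hom.restrictScalars ℤ).comp (TensorProduct.mk ℤ ℚ X 1)).toAddMonoidHom).toIntLinearMap)
              ((1:ℚ) ⊗ₜ[ℤ] x) = a • h.hom ((1:ℚ) ⊗ₜ[ℤ] x)
            rw [LinearMap.liftBaseChange_tmul, one_smul]
            rfl
          | add u v hu hv => rw [map_add, map_add, hu, hv]
        right_inv := fun g => by
          apply AddCommGrpCat.hom_ext
          apply AddMonoidHom.ext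
          intro x
          show (LinearMap.liftBaseChange ℚ (show ↥X →+ ↥N from g.hom).toIntLinearMap)
            ((1:ℚ) ⊗ₜ[ℤ] x) = (show ↥X →+ ↥N from g.hom) x
          simp }
    homEquiv_naturality_left_symm := by
      intro X' X N f g
      apply ModuleCat.hom_ext
      apply LinearMap.ext
      intro t
      induction t using TensorProduct.induction_on with
      | zero => exact (map_zero _).trans (map_zero _).symm
      | tmul a x =>
        show (LinearMap.liftBaseChange ℚ (show ↥X' →+ ↥N from (f ≫ g).hom).toIntLinearMap) (a ⊗ₜ[ℤ] x)
          = (LinearMap.liftBaseChange ℚ (show ↥X →+ ↥N from g.hom).toIntLinearMap)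
            ((f.hom.toIntLinearMap.baseChange ℚ) (a ⊗ₜ[ℤ] x))
        rw [LinearMap.baseChange_tmul]
        simp
      | add u v hu hv =>
        exact (map_add _ u v).trans ((congrArg₂ (· + ·) hu hv).trans (map_add _ u v).symm)
    homEquiv_naturality_right := by
      intro X N N' h k
      rfl }



abbrev S₀ : Submonoid ℤ := nonZeroDivisors ℤ

instance locmod (X : AddCommGrpCat.{0}) : IsLocalizedModule S₀ (TensorProduct.mk ℤ ℚ X 1) :=
  (isLocalizedModule_iff_isBaseChange S₀ ℚ _).mpr (TensorProduct.isBaseChange ℤ X ℚ)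

lemma finOrd_iff {M : Type} [AddCommGroup M] (x : M) :
    IsOfFinAddOrder x ↔ ∃ c : ℤ, c ≠ 0 ∧ c • x = 0 := by
  rw [isOfFinAddOrder_iff_nsmul_eq_zero]
  constructor
  · rintro ⟨n, hn, h⟩
    exact ⟨n, by exact_mod_cast hn.ne', by rw [natCast_zsmul]; exact h⟩
  · rintro ⟨c, hc, h⟩
    have hpos : 0 < c * c := mul_self_pos.mpr hc
    refine ⟨(c * c).toNat, by omega, ?_⟩
    have h2 : ((c * c).toNat : ℤ) • x = 0 := by
      rw [Int.toNat_of_nonneg hpos.le, mul_smul, h, smul_zero]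
    rw [← natCast_zsmul]
    exact h2

lemma key {X Y : AddCommGrpCat.{0}} (f : X ⟶ Y) :
    Function.Bijective (f.hom.toIntLinearMap.baseChange ℚ) ↔
      (AddMonoid.IsTorsion f.hom.ker ∧ AddMonoid.IsTorsion (Y ⧸ f.hom.range)) := by
  set fX := TensorProduct.mk ℤ ℚ X 1 with hfX
  set fY := TensorProduct.mk ℤ ℚ Y 1 with hfY
  set B := f.hom.toIntLinearMap.baseChange ℚ with hB
  have hBX : ∀ x : X, B (fX x) = fY (f x) := fun x => rfl
  constructor
  · rintro ⟨hinj, hsurj⟩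
    constructor
    · intro x
      rw [← AddSubmonoid.isOfFinAddOrder_coe, finOrd_iff]
      have hx0 : fX (x : X) = 0 := by
        apply hinj
        rw [map_zero, hBX, AddMonoidHom.mem_ker.mp x.2, map_zero]
      obtain ⟨s, hs⟩ := (IsLocalizedModule.eq_zero_iff S₀ fX).mp hx0
      exact ⟨s, mem_nonZeroDivisors_iff_ne_zero.mp s.2, hs⟩
    · intro y'
      induction y' using QuotientAddGroup.induction_on with
      | H y =>
      rw [finOrd_iff]
      obtain ⟨t, ht⟩ := hsurj ((1:ℚ) ⊗ₜ[ℤ] y)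
      obtain ⟨⟨x, s⟩, hst⟩ := IsLocalizedModule.surj S₀ fX t
      replace hst : s • t = fX x := hst
      have h1 : fY ((s:ℤ) • y) = fY (f x) := by
        show (1:ℚ) ⊗ₜ[ℤ] ((s:ℤ) • y) = fY (f x)
        rw [TensorProduct.tmul_smul, ← ht, ← map_zsmul B (s:ℤ) t, ← Submonoid.smul_def,
          hst, hBX]
      obtain ⟨c, hc⟩ := (IsLocalizedModule.eq_iff_exists S₀ fY).mp h1
      refine ⟨(c:ℤ) * (s:ℤ), mul_ne_zero (mem_nonZeroDivisors_iff_ne_zero.mp c.2)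
        (mem_nonZeroDivisors_iff_ne_zero.mp s.2), ?_⟩
      have h2 : ((c:ℤ) * (s:ℤ)) • y = f ((c:ℤ) • x) := by
        rw [mul_smul, map_zsmul]
        simpa [Submonoid.smul_def] using hc
      show ((c:ℤ) * (s:ℤ)) • ((QuotientAddGroup.mk' f.hom.range) y) = 0
      rw [← map_zsmul (QuotientAddGroup.mk' f.hom.range) ((c:ℤ) * (s:ℤ)) y,
        QuotientAddGroup.mk'_apply, h2]
      exact (QuotientAddGroup.eq_zero_iff _).mpr ⟨(c:ℤ) • x, rfl⟩
  · rintro ⟨hker, hcok⟩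
    constructor
    · rw [injective_iff_map_eq_zero]
      intro t ht
      obtain ⟨⟨x, s⟩, hst⟩ := IsLocalizedModule.surj S₀ fX t
      replace hst : s • t = fX x := hst
      have h0 : fY (f x) = 0 := by
        rw [← hBX, ← hst, Submonoid.smul_def, map_zsmul B (s:ℤ) t, ht, smul_zero]
      obtain ⟨s', hs'⟩ := (IsLocalizedModule.eq_zero_iff S₀ fY).mp h0
      have hmem : ((s':ℤ) • x) ∈ f.hom.ker := by
        rw [AddMonoidHom.mem_ker, map_zsmul]
        simpa [Submonoid.smul_def] using hs'
      have hfin : IsOfFinAddOrder ((s':ℤ) • x) :=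
        AddSubmonoid.isOfFinAddOrder_coe.mpr (hker ⟨_, hmem⟩)
      obtain ⟨c, hc0, hc⟩ := (finOrd_iff _).mp hfin
      have hx0 : fX ((c * (s':ℤ)) • x) = 0 := by
        rw [mul_smul, hc, map_zero]
      have ht0 : ((c * (s':ℤ) * (s:ℤ)) : ℤ) • t = 0 := by
        rw [mul_smul, ← Submonoid.smul_def, hst, ← map_zsmul fX (c * (s':ℤ)) x, hx0]
      have hne : ((c * (s':ℤ) * (s:ℤ) : ℤ) : ℚ) ≠ 0 := by
        have := mem_nonZeroDivisors_iff_ne_zero.mp s.2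
        have := mem_nonZeroDivisors_iff_ne_zero.mp s'.2
        exact_mod_cast mul_ne_zero (mul_ne_zero hc0 ‹(s':ℤ) ≠ 0›) ‹(s:ℤ) ≠ 0›
      have hq : ((c * (s':ℤ) * (s:ℤ) : ℤ) : ℚ) • t = 0 := by
        rw [Int.cast_smul_eq_zsmul]; exact ht0
      calc t = (((c * (s':ℤ) * (s:ℤ) : ℤ) : ℚ))⁻¹ • (((c * (s':ℤ) * (s:ℤ) : ℤ) : ℚ) • t) := by
              rw [smul_smul, inv_mul_cancel₀ hne, one_smul]
        _ = 0 := by rw [hq, smul_zero]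
    · intro t
      induction t using TensorProduct.induction_on with
      | zero => exact ⟨0, map_zero _⟩
      | tmul a y =>
        have hfin : IsOfFinAddOrder (QuotientAddGroup.mk y : Y ⧸ f.hom.range) :=
          hcok _
        obtain ⟨c, hc0, hc⟩ := (finOrd_iff _).mp hfin
        have h3 : (QuotientAddGroup.mk' f.hom.range) (c • y) = 0 := by
          rw [map_zsmul (QuotientAddGroup.mk' f.hom.range) c y]
          exact hc
        rw [QuotientAddGroup.mk'_apply] at h3
        obtain ⟨x, hx⟩ := (QuotientAddGroup.eq_zero_iff _).mp h3
        refine ⟨(a * (c:ℚ)⁻¹) ⊗ₜ[ℤ] x, ?_⟩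
        show (a * (c:ℚ)⁻¹) ⊗ₜ[ℤ] (f x) = a ⊗ₜ[ℤ] y
        rw [hx, TensorProduct.tmul_smul, ← Int.cast_smul_eq_zsmul ℚ,
          TensorProduct.smul_tmul', smul_eq_mul]
        have hcq : (c : ℚ) ≠ 0 := by exact_mod_cast hc0
        rw [show (c:ℚ) * (a * (c:ℚ)⁻¹) = a by field_simp]
      | add u v hu hv =>
        obtain ⟨u', hu⟩ := hu
        obtain ⟨v', hv⟩ := hv
        exact ⟨u' + v', by rw [map_add, hu, hv]⟩



lemma QF_inverts_iff {X Y : AddCommGrpCat.{0}} (f : X ⟶ Y) :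
    IsIso (QF.map f) ↔ torsionW f := by
  rw [ConcreteCategory.isIso_iff_bijective]
  exact key f

lemma W_eq : torsionW =
    (MorphismProperty.isomorphisms (ModuleCat.{0} ℚ)).inverseImage QF := by
  funext X Y f
  exact propext ((QF_inverts_iff f).symm)

lemma QF_isLoc : QF.IsLocalization torsionW := by
  have h := adj.isLocalization
  rw [← W_eq] at h
  exact h

end
end AbTorsionAux

/-- The quotient of the category of abelian groups by the Serre subcategory of torsion
abelian groups (realized as the localization at the morphisms with torsion kernel and
cokernel) is equivalent to the category of rational vector spaces.  In particular, the
Hom-set in the quotient category between `ℤ` and `ℤ` is `ℚ` (computed as the colimit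
over `n` of `Hom(nℤ, ℤ) = (1/n)ℤ`). -/
theorem ab_quotient_torsion_equiv_rat_modules :
    Nonempty (torsionW.Localization ≌ ModuleCat.{0} ℚ) ∧
    Nonempty ((torsionW.Q.obj (AddCommGrpCat.of ℤ) ⟶ torsionW.Q.obj (AddCommGrpCat.of ℤ)) ≃ ℚ) := by
  haveI := AbTorsionAux.QF_isLoc
  constructor
  · exact ⟨Localization.uniq torsionW.Q AbTorsionAux.QF torsionW⟩
  · refine ⟨(Localization.homEquiv torsionW torsionW.Q AbTorsionAux.QF).trans ?_⟩
    refine (AbTorsionAux.adj.homEquiv (AddCommGrpCat.of ℤ)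
      (AbTorsionAux.QF.obj (AddCommGrpCat.of ℤ))).trans ?_
    refine ConcreteCategory.homEquiv.trans ?_
    refine ((zmultiplesHom _).symm).trans ?_
    exact (TensorProduct.rid ℤ ℚ).toEquiv
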